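/- The function G(t) = 1 + t·₂F₁(1/3,2/3;5/3;t)/(1-t)^{2/3} + C·t^{1/3}/(1-t)^{2/3} satisfies the first-order ODE t - 1 + (t+1)G(t) - 3t(1-t)G'(t) = 0 on (0,1), for any constant C. -/

import Mathlib

open Real Filter Set Asymptotics MeasureTheory Complex

/-- The Gauss hypergeometric function `₂F₁(a, b; c; t)`, defined by its power series. -/
noncomputable def hyp (a b c t : ℝ) : ℝ :=
  ∑' n : ℕ, ((ascPochhammer ℝ n).eval a * (ascPochhammer ℝ n).eval b) /
    ((ascPochhammer ℝ n).eval c * (n.factorial : ℝ)) * t ^ n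


noncomputable def pc (x : ℝ) (n : ℕ) : ℝ := (ascPochhammer ℝ n).eval x

lemma pc_zero (x : ℝ) : pc x 0 = 1 := by simp [pc]
lemma pc_succ (x : ℝ) (n : ℕ) : pc x (n+1) = pc x n * (x + n) := by
  simp [pc, ascPochhammer_succ_eval]
lemma pc_pos {x : ℝ} (hx : 0 < x) (n : ℕ) : 0 < pc x n := ascPochhammer_pos n x hx

lemma pc_mono {x y : ℝ} (hx : 0 < x) (hxy : x ≤ y) (n : ℕ) : pc x n ≤ pc y n := by
  induction n with
  | zero => simp [pc_zero]
  | succ n ih =>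
    rw [pc_succ, pc_succ]
    have h1 : (0:ℝ) < x + n := by positivity
    have := pc_pos hx n
    nlinarith [pc_pos (lt_of_lt_of_le hx hxy) n]

lemma pc_le_factorial {x : ℝ} (hx : 0 < x) (hx1 : x ≤ 1) (n : ℕ) :
    pc x n ≤ n.factorial := by
  induction n with
  | zero => simp [pc_zero]
  | succ n ih =>
    rw [pc_succ]
    have h1 : x + n ≤ 1 + n := by linarith
    have h2 : (0:ℝ) < x + n := by positivity
    have h3 := pc_pos hx n
    have : ((n+1).factorial : ℝ) = (n.factorial : ℝ) * (1 + n) := by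
      push_cast [Nat.factorial_succ]; ring
    rw [this]
    nlinarith [(Nat.cast_pos (α := ℝ)).mpr n.factorial_pos]

/-- coefficient of hypergeometric -/
noncomputable def cc (n : ℕ) : ℝ := (pc (1/3) n * pc (2/3) n) / (pc (5/3) n * n.factorial)
/-- coefficient of binomial series -/
noncomputable def bb (n : ℕ) : ℝ := pc (1/3) n / n.factorial

lemma key_identity (n : ℕ) : (3 * n + 2) * cc n = 2 * bb n := by
  have h : pc (2/3) n * (3 * n + 2) = 2 * pc (5/3) n := by
    induction n with
    | zero => norm_num [pc_zero]
    | succ n ih =>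
      rw [pc_succ, pc_succ]
      push_cast
      nlinarith [ih]
  have h5 : pc (5/3) n ≠ 0 := (pc_pos (by norm_num) n).ne'
  have hf : (n.factorial : ℝ) ≠ 0 := Nat.cast_ne_zero.mpr n.factorial_pos.ne'
  rw [cc, bb]
  field_simp
  linear_combination (pc (1/3) n) * h

lemma bb_succ (n : ℕ) : bb (n+1) * (n+1) = bb n * (1/3 + n) := by
  have hf : (n.factorial : ℝ) ≠ 0 := Nat.cast_ne_zero.mpr n.factorial_pos.ne'
  have : ((n+1).factorial : ℝ) = (n.factorial : ℝ) * (n+1) := by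
    push_cast [Nat.factorial_succ]; ring
  rw [bb, bb, pc_succ, this]
  field_simp


lemma summable_aux {a : ℕ → ℝ} {M : ℝ} (hM : ∀ n, |a n| ≤ M) {x : ℝ} (hx : |x| < 1) :
    Summable (fun n => a n * x ^ n) := by
  apply Summable.of_norm
  apply Summable.of_nonneg_of_le (fun n => norm_nonneg _) (fun n => ?_)
    ((summable_geometric_of_lt_one (abs_nonneg x) hx).mul_left M)
  rw [norm_mul, norm_pow, Real.norm_eq_abs, Real.norm_eq_abs]
  have h0 : (0:ℝ) ≤ M := le_trans (abs_nonneg _) (hM 0)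
  exact mul_le_mul (hM n) le_rfl (by positivity) h0

lemma summable_shift {M : ℝ} (hM : 0 ≤ M) {r : ℝ} (hr0 : 0 ≤ r) (hr1 : r < 1) :
    Summable (fun n : ℕ => M * ((n : ℝ) * r ^ (n - 1))) := by
  rw [← summable_nat_add_iff 1]
  have h1 : Summable (fun n : ℕ => (n:ℝ)^1 * r ^ n) :=
    summable_pow_mul_geometric_of_norm_lt_one 1 (by rwa [Real.norm_eq_abs, _root_.abs_of_nonneg hr0])
  have h2 := (h1.add (summable_geometric_of_lt_one hr0 hr1)).mul_left M
  apply h2.congr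
  intro n
  simp only [Nat.add_sub_cancel]
  push_cast; ring

lemma deriv_term_bound {a : ℕ → ℝ} {M : ℝ} (hM : ∀ n, |a n| ≤ M) {y r : ℝ}
    (hyr : |y| ≤ r) (n : ℕ) :
    ‖a n * ((n : ℝ) * y ^ (n - 1))‖ ≤ M * ((n : ℝ) * r ^ (n - 1)) := by
  have h0 : (0:ℝ) ≤ M := le_trans (abs_nonneg _) (hM 0)
  have hr0 : 0 ≤ r := le_trans (abs_nonneg y) hyr
  rw [Real.norm_eq_abs, _root_.abs_mul, _root_.abs_mul, Nat.abs_cast, _root_.abs_pow]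
  match n with
  | 0 => simp
  | (m+1) =>
    simp only [Nat.add_sub_cancel]
    have h1 : |y| ^ m ≤ r ^ m := pow_le_pow_left₀ (abs_nonneg y) hyr m
    have h2 : |a (m+1)| ≤ M := hM _
    push_cast
    have h3 := mul_le_mul h2 (mul_le_mul_of_nonneg_left h1 (by positivity : (0:ℝ) ≤ (m:ℝ)+1))
      (by positivity) h0
    linarith

lemma summable_deriv_aux {a : ℕ → ℝ} {M : ℝ} (hM : ∀ n, |a n| ≤ M) {x : ℝ} (hx : |x| < 1) :
    Summable (fun n => a n * (n * x ^ (n - 1))) := by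
  apply Summable.of_norm
  have h0 : (0:ℝ) ≤ M := le_trans (abs_nonneg _) (hM 0)
  exact Summable.of_nonneg_of_le (fun n => norm_nonneg _)
    (fun n => deriv_term_bound hM le_rfl n) (summable_shift h0 (abs_nonneg x) hx)

lemma pser_hasDerivAt (a : ℕ → ℝ) {M : ℝ} (hM : ∀ n, |a n| ≤ M) {t : ℝ} (ht : |t| < 1) :
    HasDerivAt (fun s => ∑' n, a n * s ^ n) (∑' n, a n * (n * t ^ (n - 1))) t := by
  set r : ℝ := (1 + |t|) / 2 with hr
  have h0 : (0:ℝ) ≤ M := le_trans (abs_nonneg _) (hM 0)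
  have hr0 : (0:ℝ) ≤ r := by positivity
  have hrt : |t| < r := by rw [hr]; linarith [abs_nonneg t]
  have hr1 : r < 1 := by rw [hr]; linarith
  have hu : Summable (fun n : ℕ => M * ((n : ℝ) * r ^ (n - 1))) := summable_shift h0 hr0 hr1
  have hbd : ∀ (n : ℕ), ∀ y ∈ Ioo (-r) r, ‖a n * ((n:ℝ) * y ^ (n - 1))‖ ≤ M * ((n:ℝ) * r ^ (n-1)) := by
    intro n y hy
    exact deriv_term_bound hM (abs_le.mpr ⟨hy.1.le, hy.2.le⟩) n
  have hr0' : (0:ℝ) < r := by rw [hr]; positivity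
  have h00 : (0:ℝ) ∈ Ioo (-r) r := ⟨by linarith, hr0'⟩
  have hsum0 : Summable (fun n => a n * (0:ℝ) ^ n) := by
    apply summable_of_ne_finset_zero (s := {0})
    intro n hn
    simp only [Finset.mem_singleton] at hn
    simp [zero_pow hn]
  exact hasDerivAt_tsum_of_isPreconnected hu isOpen_Ioo (convex_Ioo _ _).isPreconnected
    (fun n y _ => (hasDerivAt_pow n y).const_mul (a n)) hbd h00 hsum0
    (abs_lt.mp hrt)

lemma bb_bound (n : ℕ) : |bb n| ≤ 1 := by
  have h1 := pc_pos (x := 1/3) (by norm_num) n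
  have h2 := pc_le_factorial (x := 1/3) (by norm_num) (by norm_num) n
  have h3 : (0:ℝ) < n.factorial := Nat.cast_pos.mpr n.factorial_pos
  have hpos : 0 < bb n := div_pos h1 h3
  rw [_root_.abs_of_pos hpos, bb, div_le_one h3]
  exact h2

/-- derivative recurrence: (1-s) * B'(s) = (1/3) * B(s) -/
lemma bin_rec {s : ℝ} (hs : |s| < 1) :
    (1 - s) * (∑' n, bb n * (n * s ^ (n - 1))) = (1/3) * ∑' n, bb n * s ^ n := by
  have hsum1 : Summable (fun n => bb n * s ^ n) := summable_aux bb_bound hs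
  have hsumD : Summable (fun n => bb n * (n * s ^ (n - 1))) := summable_deriv_aux bb_bound hs
  have step1 : (∑' n, bb n * (n * s ^ (n - 1))) = ∑' m : ℕ, bb (m+1) * ((m+1 : ℕ) * s ^ m) := by
    rw [hsumD.tsum_eq_zero_add]
    simp
  have step2 : ∀ m : ℕ, bb (m+1) * ((m+1 : ℕ) * s ^ m)
      = (1/3) * (bb m * s ^ m) + s * (bb m * (m * s ^ (m - 1))) := by
    intro m
    have h := bb_succ m
    have hpow : s * (↑m * s ^ (m-1)) = ↑m * s ^ m := by
      match m with
      | 0 => simp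
      | (k+1) => simp only [Nat.add_sub_cancel]; push_cast; ring
    push_cast
    calc bb (m+1) * ((↑m+1) * s ^ m) = (bb (m+1) * (↑m+1)) * s ^ m := by ring
      _ = (bb m * (1/3 + ↑m)) * s ^ m := by rw [h]
      _ = (1/3) * (bb m * s ^ m) + bb m * (↑m * s ^ m) := by ring
      _ = _ := by rw [← hpow]; ring
  have step3 : (∑' n, bb n * (n * s ^ (n - 1))) = (1/3) * (∑' n, bb n * s ^ n)
      + s * (∑' n, bb n * (n * s ^ (n - 1))) := by
    conv_lhs => rw [step1, tsum_congr step2]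
    rw [Summable.tsum_add (hsum1.mul_left _) (hsumD.mul_left _), tsum_mul_left, tsum_mul_left]
  linear_combination step3

/-- binomial series: B(t) * (1-t)^{1/3} = 1 on [0,1) -/
lemma bin_eq {t : ℝ} (ht0 : 0 ≤ t) (ht1 : t < 1) :
    (1 - t) ^ ((1:ℝ)/3) * ∑' n, bb n * t ^ n = 1 := by
  set φ : ℝ → ℝ := fun s => (1 - s) ^ ((1:ℝ)/3) * ∑' n, bb n * s ^ n with hφ
  have hder : ∀ s ∈ Icc 0 t, HasDerivAt φ 0 s := by
    intro s hs
    have hs1 : 0 < 1 - s := by rcases hs with ⟨h1, h2⟩; linarith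
    have habs : |s| < 1 := abs_lt.mpr ⟨by rcases hs with ⟨h1,_⟩; linarith, by rcases hs with ⟨_,h2⟩; linarith⟩
    have hBd : HasDerivAt (fun u => ∑' n, bb n * u ^ n) (∑' n, bb n * (n * s ^ (n-1))) s :=
      pser_hasDerivAt bb bb_bound habs
    have hrp : HasDerivAt (fun u : ℝ => (1 - u) ^ ((1:ℝ)/3))
        ((1/3) * (1-s) ^ ((1:ℝ)/3 - 1) * (-1)) s := by
      have h1 : HasDerivAt (fun x : ℝ => x ^ ((1:ℝ)/3)) ((1/3) * (1-s) ^ ((1:ℝ)/3 - 1)) (1 - s) :=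
        Real.hasDerivAt_rpow_const (x := 1 - s) (p := (1:ℝ)/3) (Or.inl hs1.ne')
      have h2 : HasDerivAt (fun u : ℝ => 1 - u) (-1) s := (hasDerivAt_id s).const_sub 1
      exact h1.comp s h2
    have key := hrp.mul hBd
    convert key using 1
    · rfl
    · rfl
    · rfl
    have hrw : (1-s) ^ ((1:ℝ)/3 - 1) = (1-s) ^ ((1:ℝ)/3) / (1-s) := by
      rw [Real.rpow_sub hs1, Real.rpow_one]
    rw [hrw]
    have hrec := bin_rec habs
    set B : ℝ := ∑' n, bb n * s ^ n
    set D : ℝ := ∑' n, bb n * (n * s ^ (n - 1))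
    field_simp
    linear_combination (-3 : ℝ) * (1-s) ^ ((1:ℝ)/3) * hrec
  have hcont : ContinuousOn φ (Icc 0 t) := fun s hs => (hder s hs).continuousAt.continuousWithinAt
  have hconst := constant_of_has_deriv_right_zero hcont
    (fun s hs => (hder s (Ico_subset_Icc_self hs)).hasDerivWithinAt) t (right_mem_Icc.mpr ht0)
  have hφ0 : φ 0 = 1 := by
    rw [hφ]
    simp only [sub_zero, Real.one_rpow, one_mul]
    rw [tsum_eq_single 0 (fun n hn => by simp [zero_pow hn])]
    simp [bb, pc_zero]
  exact hconst.trans hφ0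

lemma cc_bound (n : ℕ) : |cc n| ≤ 1 := by
  have h1 := pc_pos (x := 1/3) (by norm_num) n
  have h2 := pc_pos (x := 2/3) (by norm_num) n
  have h5 := pc_pos (x := 5/3) (by norm_num) n
  have hf : (0:ℝ) < n.factorial := Nat.cast_pos.mpr n.factorial_pos
  have hle1 := pc_le_factorial (x := 1/3) (by norm_num) (by norm_num) n
  have hle2 := pc_mono (x := 2/3) (y := 5/3) (by norm_num) (by norm_num) n
  have hpos : 0 < cc n := div_pos (by positivity) (by positivity)
  rw [_root_.abs_of_pos hpos, cc, div_le_one (by positivity)]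
  nlinarith


/-- the one-parameter family
`G_C(t) = 1 + t·₂F₁(1/3,2/3;5/3;t)/(1-t)^{2/3} + C·t^{1/3}/(1-t)^{2/3}`
solves the ODE `t - 1 + (t+1)·G(t) - 3t(1-t)·G'(t) = 0` on `(0,1)`. -/
theorem stmt0 (C : ℝ) :
    ∀ t ∈ Set.Ioo (0 : ℝ) 1,
      ∃ g' : ℝ,
        HasDerivAt (fun s : ℝ =>
            1 + s * hyp (1/3) (2/3) (5/3) s / (1 - s) ^ ((2 : ℝ)/3)
              + C * s ^ ((1 : ℝ)/3) / (1 - s) ^ ((2 : ℝ)/3)) g' t ∧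
        t - 1 + (t + 1) *
            (1 + t * hyp (1/3) (2/3) (5/3) t / (1 - t) ^ ((2 : ℝ)/3)
              + C * t ^ ((1 : ℝ)/3) / (1 - t) ^ ((2 : ℝ)/3))
          - 3 * t * (1 - t) * g' = 0 := by
  intro t ht
  obtain ⟨ht0, ht1⟩ := ht
  have h1t : (0:ℝ) < 1 - t := by linarith
  have habs : |t| < 1 := abs_lt.mpr ⟨by linarith, ht1⟩
  -- the hypergeometric series and its derivative
  have hyp_eq : ∀ s : ℝ, hyp (1/3) (2/3) (5/3) s = ∑' n, cc n * s ^ n := fun s => rfl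
  set D : ℝ := ∑' n, cc n * (n * t ^ (n - 1)) with hDdef
  set H : ℝ := hyp (1/3) (2/3) (5/3) t with hHdef
  have hH : HasDerivAt (fun s => hyp (1/3) (2/3) (5/3) s) D t := pser_hasDerivAt cc cc_bound habs
  -- key series identity : 3 t D + 2 H = 2 B(t)
  set Bt : ℝ := ∑' n, bb n * t ^ n with hBdef
  have keyB : 3 * t * D + 2 * H = 2 * Bt := by
    have hsH : Summable (fun n => cc n * t ^ n) := summable_aux cc_bound habs
    have hsD : Summable (fun n => cc n * (n * t ^ (n - 1))) := summable_deriv_aux cc_bound habs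
    have e : ∀ n : ℕ, (3*t) * (cc n * (n * t ^ (n-1))) + 2 * (cc n * t ^ n)
        = 2 * (bb n * t ^ n) := by
      intro n
      have hk := key_identity n
      have hpow : t * ((n:ℝ) * t ^ (n-1)) = n * t ^ n := by
        match n with
        | 0 => simp
        | (k+1) => simp only [Nat.add_sub_cancel]; push_cast; ring
      calc (3*t) * (cc n * (n * t ^ (n-1))) + 2 * (cc n * t ^ n)
          = 3 * cc n * (t * ((n:ℝ) * t ^ (n-1))) + 2 * (cc n * t ^ n) := by ring
        _ = 3 * cc n * ((n:ℝ) * t ^ n) + 2 * (cc n * t ^ n) := by rw [hpow]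
        _ = ((3*n+2) * cc n) * t ^ n := by ring
        _ = (2 * bb n) * t ^ n := by rw [hk]
        _ = 2 * (bb n * t ^ n) := by ring
    calc 3 * t * D + 2 * H
        = ∑' n, ((3*t) * (cc n * (n * t ^ (n-1))) + 2 * (cc n * t ^ n)) := by
          rw [Summable.tsum_add (hsD.mul_left _) (hsH.mul_left _), tsum_mul_left, tsum_mul_left,
            hDdef, hHdef, hyp_eq]
      _ = ∑' n, 2 * (bb n * t ^ n) := tsum_congr e
      _ = 2 * Bt := by rw [hBdef, tsum_mul_left]
  have hbin : (1 - t) ^ ((1:ℝ)/3) * Bt = 1 := bin_eq ht0.le ht1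
  -- derivative of the full function
  have hdenne : (1 - t) ^ ((2:ℝ)/3) ≠ 0 := (Real.rpow_pos_of_pos h1t _).ne'
  have hden : HasDerivAt (fun s : ℝ => (1 - s) ^ ((2:ℝ)/3))
      ((2:ℝ)/3 * (1-t) ^ ((2:ℝ)/3 - 1) * (-1)) t := by
    have h1 : HasDerivAt (fun x : ℝ => x ^ ((2:ℝ)/3)) ((2:ℝ)/3 * (1-t) ^ ((2:ℝ)/3 - 1)) (1 - t) :=
      Real.hasDerivAt_rpow_const (x := 1 - t) (p := (2:ℝ)/3) (Or.inl h1t.ne')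
    exact h1.comp t ((hasDerivAt_id t).const_sub 1)
  have hq1 : HasDerivAt (fun s : ℝ => s * hyp (1/3) (2/3) (5/3) s / (1 - s) ^ ((2:ℝ)/3))
      (((1 * H + t * D) * (1-t) ^ ((2:ℝ)/3) - (t * H) * ((2:ℝ)/3 * (1-t) ^ ((2:ℝ)/3 - 1) * (-1)))
        / ((1-t) ^ ((2:ℝ)/3)) ^ 2) t :=
    ((hasDerivAt_id t).mul hH).div hden hdenne
  have hq2 : HasDerivAt (fun s : ℝ => C * s ^ ((1:ℝ)/3) / (1 - s) ^ ((2:ℝ)/3))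
      ((C * ((1:ℝ)/3 * t ^ ((1:ℝ)/3 - 1)) * (1-t) ^ ((2:ℝ)/3)
        - (C * t ^ ((1:ℝ)/3)) * ((2:ℝ)/3 * (1-t) ^ ((2:ℝ)/3 - 1) * (-1)))
        / ((1-t) ^ ((2:ℝ)/3)) ^ 2) t :=
    (((Real.hasDerivAt_rpow_const (x := t) (p := (1:ℝ)/3) (Or.inl ht0.ne')).const_mul C).div
      hden hdenne)
  refine ⟨_, ((hasDerivAt_const t (1:ℝ)).add hq1).add hq2, ?_⟩
  -- final algebra
  set x : ℝ := t ^ ((1:ℝ)/3) with hxdef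
  set y : ℝ := (1 - t) ^ ((1:ℝ)/3) with hydef
  have hx : 0 < x := Real.rpow_pos_of_pos ht0 _
  have hy : 0 < y := Real.rpow_pos_of_pos h1t _
  have hx3 : x ^ 3 = t := by
    rw [hxdef, ← Real.rpow_natCast (t ^ ((1:ℝ)/3)) 3, ← Real.rpow_mul ht0.le]; norm_num
  have hy3 : y ^ 3 = 1 - t := by
    rw [hydef, ← Real.rpow_natCast ((1-t) ^ ((1:ℝ)/3)) 3, ← Real.rpow_mul h1t.le]; norm_num
  have hy2 : (1 - t) ^ ((2:ℝ)/3) = y ^ 2 := by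
    rw [hydef, ← Real.rpow_natCast ((1-t) ^ ((1:ℝ)/3)) 2, ← Real.rpow_mul h1t.le]; norm_num
  have hy2' : (1 - t) ^ ((2:ℝ)/3 - 1) = y⁻¹ := by
    rw [show (2:ℝ)/3 - 1 = -((1:ℝ)/3) by norm_num, Real.rpow_neg h1t.le, hydef]
  have hx2 : t ^ ((2:ℝ)/3) = x ^ 2 := by
    rw [hxdef, ← Real.rpow_natCast (t ^ ((1:ℝ)/3)) 2, ← Real.rpow_mul ht0.le]; norm_num
  have hx1' : t ^ ((1:ℝ)/3 - 1) = (x ^ 2)⁻¹ := by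
    rw [show (1:ℝ)/3 - 1 = -((2:ℝ)/3) by norm_num, Real.rpow_neg ht0.le, hx2]
  have keyB' : y * (3 * t * D + 2 * H) = 2 := by
    rw [keyB, hydef]; linarith [hbin]
  rw [hy2, hy2', hx1']
  have hyne : y ≠ 0 := hy.ne'
  have htne : t ≠ 0 := ht0.ne'
  have h1tne : (1:ℝ) - t ≠ 0 := h1t.ne'
  have ht_eq : t = x ^ 3 := hx3.symm
  have h2 : (1:ℝ) - x ^ 3 = y ^ 3 := by rw [hx3]; exact hy3.symm
  have keyB'' : y * (3 * x ^ 3 * D + 2 * H) = 2 := by rw [hx3]; exact keyB'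
  rw [ht_eq, h2]
  have hxne : x ≠ 0 := hx.ne'
  field_simp
  linear_combination (x^3*H + x*C) * h2 - x^3*y^2 * keyB''
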